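/- Conversely, every OWA operator with weight vector v = (v_1,...,v_n) is a Choquet integral with respect to the symmetric monotone measure defined by μ(A) := Σ_{i=1}^{|A|} v_i. -/

import Mathlib

open Finset

structure MonMeasure (n : ℕ) where
  m : Finset (Fin n) → ℝ
  empty : m ∅ = 0
  univ : m Finset.univ = 1
  nonneg : ∀ A, 0 ≤ m A
  le_one : ∀ A, m A ≤ 1
  mono : ∀ ⦃A B : Finset (Fin n)⦄, A ⊆ B → m A ≤ m B

/-- The value `f(x*_{i+1})` (1-based) of the increasing ordering `σ`, i.e. `f (σ i)` (0-based). -/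
noncomputable def vals {n : ℕ} (f : Fin n → ℝ) (σ : Equiv.Perm (Fin n)) (i : ℕ) : ℝ :=
  if h : i < n then f (σ ⟨i, h⟩) else 0

/-- The set `A*_{i+1} = {x*_{i+1}, ..., x*_n}` (1-based), i.e. `{σ j : j ≥ i}` (0-based). -/
def upSet {n : ℕ} (σ : Equiv.Perm (Fin n)) (i : ℕ) : Finset (Fin n) :=
  (Finset.univ.filter (fun j : Fin n => i ≤ (j : ℕ))).image σ

/-- The Choquet integral `∫ f dμ = Σ_{i=1}^n μ(A*_i)·[f(x*_i) − f(x*_{i−1})]`, where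
`σ` enumerates `X` so that `f∘σ` is increasing, and `f(x*_0) := 0`. -/
noncomputable def choquet {n : ℕ} (μ : Finset (Fin n) → ℝ) (f : Fin n → ℝ)
    (σ : Equiv.Perm (Fin n)) : ℝ :=
  ∑ i ∈ Finset.range n,
    μ (upSet σ i) * (vals f σ i - if i = 0 then 0 else vals f σ (i - 1))

/-- Every OWA operator with weight vector `v` is the Choquet integral w.r.t. the
symmetric measure `μ(A) := Σ_{i=1}^{|A|} v_i`. -/

lemma aux_card_filter (n i : ℕ) :
    (Finset.univ.filter fun j : Fin n => i ≤ (j : ℕ)).card = n - i := by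
  rcases lt_or_ge i n with h | h
  · have : (Finset.univ.filter fun j : Fin n => i ≤ (j : ℕ)) = Finset.Ici ⟨i, h⟩ := by
      ext j; simp [Fin.le_def]
    rw [this, Fin.card_Ici]
  · have : (Finset.univ.filter fun j : Fin n => i ≤ (j : ℕ)) = ∅ := by
      ext j; simp only [mem_filter, mem_univ, true_and, Finset.notMem_empty, iff_false]
      omega
    rw [this, Finset.card_empty]; omega

lemma aux_card_upSet {n : ℕ} (σ : Equiv.Perm (Fin n)) (i : ℕ) :
    (upSet σ i).card = n - i := by
  rw [upSet, Finset.card_image_of_injective _ σ.injective, aux_card_filter]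

lemma aux_sorted {n : ℕ} (f : Fin n → ℝ) (σ τ : Equiv.Perm (Fin n))
    (hσ : Monotone (fun i : Fin n => f (σ i)))
    (hτ : Antitone (fun i : Fin n => f (τ i))) :
    ∀ i : Fin n, f (τ i) = f (σ i.rev) := by
  have hperm : ∀ (ρ : Equiv.Perm (Fin n)),
      (List.ofFn fun i => f (ρ i)).Perm (List.ofFn f) := by
    intro ρ
    rw [List.ofFn_eq_map, List.ofFn_eq_map]
    have : (List.map (fun i => f (ρ i)) (List.finRange n))
        = List.map f ((List.finRange n).map ρ) := by
      simp [List.map_map, Function.comp]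
    rw [this]
    apply List.Perm.map
    apply List.perm_of_nodup_nodup_toFinset_eq
    · exact (List.nodup_finRange n).map ρ.injective
    · exact List.nodup_finRange n
    · ext x
      simp only [List.toFinset_finRange, List.mem_toFinset, List.mem_map,
        List.mem_finRange, true_and, Finset.mem_univ, iff_true]
      exact ⟨ρ.symm x, ρ.apply_symm_apply x⟩
  have hmono2 : Monotone (fun i : Fin n => f (τ i.rev)) := fun a b hab =>
    hτ (Fin.rev_le_rev.mpr hab)
  have hp : (List.ofFn fun i => f (σ i)).Perm (List.ofFn fun i => f (τ i.rev)) :=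
    (hperm σ).trans (hperm (Fin.revPerm.trans τ)).symm
  have heq : (fun i : Fin n => f (σ i)) = fun i : Fin n => f (τ i.rev) :=
    List.ofFn_injective (List.Perm.eq_of_sortedLE
      (List.sortedLE_ofFn_iff.mpr hσ) (List.sortedLE_ofFn_iff.mpr hmono2) hp)
  intro i
  have := congrFun heq i.rev
  simpa [Fin.rev_rev] using this.symm

-- T lemmas
lemma aux_T_zero (n : ℕ) (v : Fin n → ℝ) :
    ∑ j ∈ Finset.univ.filter (fun j : Fin n => (j : ℕ) < 0), v j = 0 := by simp

lemma aux_T_succ (n : ℕ) (v : Fin n → ℝ) (k : ℕ) (hk : k < n) :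
    ∑ j ∈ Finset.univ.filter (fun j : Fin n => (j : ℕ) < k + 1), v j
      = (∑ j ∈ Finset.univ.filter (fun j : Fin n => (j : ℕ) < k), v j) + v ⟨k, hk⟩ := by
  have hins : Finset.univ.filter (fun j : Fin n => (j : ℕ) < k + 1)
      = insert (⟨k, hk⟩ : Fin n) (Finset.univ.filter (fun j : Fin n => (j : ℕ) < k)) := by
    ext j
    simp only [mem_filter, mem_univ, true_and, mem_insert, Fin.ext_iff]
    omega
  rw [hins, Finset.sum_insert (by simp)]
  ring

-- Abel step (claim A)
lemma aux_abel (n : ℕ) (a T : ℕ → ℝ) (hT0 : T 0 = 0) :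
    ∑ i ∈ Finset.range n, T (n - i) * (if i = 0 then 0 else a (i - 1))
      = ∑ i ∈ Finset.range n, T (n - 1 - i) * a i := by
  cases n with
  | zero => simp
  | succ m =>
    rw [Finset.sum_range_succ' (fun i => T (m + 1 - i) * (if i = 0 then 0 else a (i - 1))) m]
    rw [Finset.sum_range_succ (fun i => T (m + 1 - 1 - i) * a i) m]
    simp only [if_true, mul_zero, add_zero, Nat.add_sub_cancel, Nat.sub_self, hT0, zero_mul]
    apply Finset.sum_congr rfl
    intro i hi
    have h1 : (if i + 1 = 0 then (0:ℝ) else a i) = a i := by simp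
    have h2 : m + 1 - (i + 1) = m - i := by omega
    rw [h1, h2]

theorem stmt_4 (n : ℕ) (v : Fin n → ℝ) (hv0 : ∀ i, 0 ≤ v i) (hv1 : ∀ i, v i ≤ 1)
    (hsum : ∑ i, v i = 1)
    (f : Fin n → ℝ) (σ τ : Equiv.Perm (Fin n))
    (hσ : Monotone (fun i : Fin n => f (σ i)))
    (hτ : Antitone (fun i : Fin n => f (τ i))) :
    ∑ i : Fin n, f (τ i) * v i =
      choquet (fun A : Finset (Fin n) =>
        ∑ i ∈ Finset.univ.filter (fun i : Fin n => (i : ℕ) < A.card), v i) f σ := by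
  set T : ℕ → ℝ := fun k => ∑ j ∈ Finset.univ.filter (fun j : Fin n => (j : ℕ) < k), v j with hT
  have hT0 : T 0 = 0 := by simp [hT]
  set a : ℕ → ℝ := vals f σ with ha
  -- vv: nat-indexed weights
  set vv : ℕ → ℝ := fun k => if h : k < n then v ⟨k, h⟩ else 0 with hvv
  -- RHS rewrite
  have hrhs : choquet (fun A : Finset (Fin n) =>
      ∑ i ∈ Finset.univ.filter (fun i : Fin n => (i : ℕ) < A.card), v i) f σ
      = ∑ i ∈ Finset.range n, vv (n - 1 - i) * a i := by
    rw [choquet]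
    have step1 : ∀ i ∈ Finset.range n,
        (∑ j ∈ Finset.univ.filter (fun j : Fin n => (j : ℕ) < (upSet σ i).card), v j)
          * (vals f σ i - if i = 0 then 0 else vals f σ (i - 1))
        = T (n - i) * (a i - if i = 0 then 0 else a (i - 1)) := by
      intro i hi
      rw [aux_card_upSet]
    rw [Finset.sum_congr rfl step1]
    have expand : ∑ i ∈ Finset.range n, T (n - i) * (a i - if i = 0 then 0 else a (i - 1))
        = (∑ i ∈ Finset.range n, T (n - i) * a i)
          - ∑ i ∈ Finset.range n, T (n - i) * (if i = 0 then 0 else a (i - 1)) := by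
      rw [← Finset.sum_sub_distrib]
      exact Finset.sum_congr rfl fun i _ => by ring
    rw [expand, aux_abel n a T hT0, ← Finset.sum_sub_distrib]
    apply Finset.sum_congr rfl
    intro i hi
    rw [Finset.mem_range] at hi
    have h1 : n - i = (n - 1 - i) + 1 := by omega
    have h2 : n - 1 - i < n := by omega
    rw [h1, ← sub_mul]
    have hstep : T (n - 1 - i + 1) = T (n - 1 - i) + v ⟨n - 1 - i, h2⟩ :=
      aux_T_succ n v _ h2
    rw [hstep, hvv]
    simp [dif_pos h2]
  rw [hrhs]
  -- LHS
  have hlhs : ∑ i : Fin n, f (τ i) * v i = ∑ i : Fin n, vv (n - 1 - (i : ℕ)) * a (i : ℕ) := by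
    have e1 : ∑ i : Fin n, f (τ i) * v i = ∑ i : Fin n, f (σ i.rev) * v i :=
      Finset.sum_congr rfl fun i _ => by rw [aux_sorted f σ τ hσ hτ]
    rw [e1]
    rw [← Equiv.sum_comp (Fin.revPerm) (fun i : Fin n => f (σ i.rev) * v i)]
    apply Finset.sum_congr rfl
    intro i _
    have hrev : (Fin.revPerm i : Fin n) = i.rev := rfl
    rw [hrev, Fin.rev_rev]
    have h2 : n - 1 - (i : ℕ) < n := by omega
    have hv' : vv (n - 1 - (i : ℕ)) = v i.rev := by
      rw [hvv]; simp only [dif_pos h2]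
      congr 1
      ext
      simp [Fin.val_rev]
      omega
    have ha' : a (i : ℕ) = f (σ i) := by
      rw [ha, vals, dif_pos i.isLt]
    rw [hv', ha']
    ring
  rw [hlhs, ← Fin.sum_univ_eq_sum_range (fun i => vv (n - 1 - i) * a i) n]
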